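/- Let h : 2^N → ℝ≥0 be monotone submodular with h(∅)=0 and multilinear extension H. Partition the ground set as N = N₁ ⊎ N₂, and for y ∈ [0,1]^N let y¹ agree with y on N₁ and be 0 on N₂, and y² agree with y on N₂ and be 0 on N₁. Then H(y¹) + H(y²) ≥ H(y). -/

import Mathlib

open Finset

/-- The multilinear extension of a set function `h` on a finite ground set. -/
noncomputable def mlExt {N : Type*} [Fintype N] [DecidableEq N]
    (h : Finset N → ℝ) (x : N → ℝ) : ℝ :=
  ∑ U ∈ (Finset.univ : Finset N).powerset,
    (∏ e ∈ U, x e) * (∏ e ∈ Finset.univ \ U, (1 - x e)) * h U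

lemma mlExt_support {N : Type*} [Fintype N] [DecidableEq N]
    (h : Finset N → ℝ) (S : Finset N) (z : N → ℝ) (hz : ∀ e, e ∉ S → z e = 0) :
    mlExt h z = ∑ U ∈ S.powerset,
      (∏ e ∈ U, z e) * (∏ e ∈ S \ U, (1 - z e)) * h U := by
  unfold mlExt
  rw [← Finset.sum_subset (Finset.powerset_mono.mpr (Finset.subset_univ S))]
  · refine Finset.sum_congr rfl fun U hU => ?_
    have hUS : U ⊆ S := Finset.mem_powerset.mp hU
    have hsplit : Finset.univ \ U = (S \ U) ∪ (Finset.univ \ S) := by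
      ext e; simp only [Finset.mem_sdiff, Finset.mem_union, Finset.mem_univ, true_and]
      tauto
    have hd : Disjoint (S \ U) (Finset.univ \ S) := by
      rw [Finset.disjoint_left]
      intro e he1 he2
      exact (Finset.mem_sdiff.mp he2).2 (Finset.mem_sdiff.mp he1).1
    rw [hsplit, Finset.prod_union hd]
    have : ∏ e ∈ Finset.univ \ S, (1 - z e) = 1 := by
      apply Finset.prod_eq_one
      intro e he
      rw [hz e (Finset.mem_sdiff.mp he).2]; ring
    rw [this, mul_one]
  · intro U _ hU
    have : ∃ e ∈ U, e ∉ S := by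
      by_contra hc
      push_neg at hc
      exact hU (Finset.mem_powerset.mpr hc)
    obtain ⟨e, heU, heS⟩ := this
    have : ∏ e ∈ U, z e = 0 := Finset.prod_eq_zero heU (hz e heS)
    rw [this, zero_mul, zero_mul]

lemma sum_powerset_disjUnion {N : Type*} [DecidableEq N] (N₁ N₂ : Finset N)
    (hd : Disjoint N₁ N₂) (f : Finset N → ℝ) :
    ∑ U ∈ (N₁ ∪ N₂).powerset, f U
      = ∑ A ∈ N₁.powerset, ∑ B ∈ N₂.powerset, f (A ∪ B) := by
  have step2 : ∑ p ∈ N₁.powerset ×ˢ N₂.powerset, f (p.1 ∪ p.2)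
      = ∑ A ∈ N₁.powerset, ∑ B ∈ N₂.powerset, f (A ∪ B) :=
    Finset.sum_product N₁.powerset N₂.powerset (fun p => f (p.1 ∪ p.2))
  rw [← step2]
  refine Finset.sum_nbij' (fun U => (U ∩ N₁, U ∩ N₂)) (fun p => p.1 ∪ p.2) ?_ ?_ ?_ ?_ ?_
  · intro U hU
    simp only [Finset.mem_product, Finset.mem_powerset]
    exact ⟨Finset.inter_subset_right, Finset.inter_subset_right⟩
  · intro p hp
    simp only [Finset.mem_product, Finset.mem_powerset] at hp ⊢
    exact Finset.union_subset_union hp.1 hp.2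
  · intro U hU
    have hUs := Finset.mem_powerset.mp hU
    simp only [← Finset.inter_union_distrib_left]
    exact Finset.inter_eq_left.mpr hUs
  · intro p hp
    simp only [Finset.mem_product, Finset.mem_powerset] at hp
    have h1 : (p.1 ∪ p.2) ∩ N₁ = p.1 := by
      ext e
      simp only [Finset.mem_inter, Finset.mem_union]
      constructor
      · rintro ⟨(h | h), hn⟩
        · exact h
        · exact absurd hn (Finset.disjoint_right.mp hd (hp.2 h))
      · intro h; exact ⟨Or.inl h, hp.1 h⟩
    have h2 : (p.1 ∪ p.2) ∩ N₂ = p.2 := by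
      ext e
      simp only [Finset.mem_inter, Finset.mem_union]
      constructor
      · rintro ⟨(h | h), hn⟩
        · exact absurd hn (Finset.disjoint_left.mp hd (hp.1 h))
        · exact h
      · intro h; exact ⟨Or.inr h, hp.2 h⟩
    exact Prod.ext h1 h2
  · intro U hU
    congr 1
    have hUs := Finset.mem_powerset.mp hU
    simp only [← Finset.inter_union_distrib_left]
    exact (Finset.inter_eq_left.mpr hUs).symm

theorem stmt12 {N : Type*} [Fintype N] [DecidableEq N]
    (h : Finset N → ℝ) (hnonneg : ∀ U, 0 ≤ h U) (h0 : h ∅ = 0)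
    (hmono : ∀ U V : Finset N, U ⊆ V → h U ≤ h V)
    (hsub : ∀ U V : Finset N, h U + h V ≥ h (U ∪ V) + h (U ∩ V))
    (N₁ N₂ : Finset N) (hdisj : Disjoint N₁ N₂) (hcover : N₁ ∪ N₂ = Finset.univ)
    (y : N → ℝ) (hy : ∀ e, 0 ≤ y e ∧ y e ≤ 1) :
    mlExt h (fun e => if e ∈ N₁ then y e else 0) +
    mlExt h (fun e => if e ∈ N₂ then y e else 0) ≥ mlExt h y := by
  -- weights
  set w₁ : Finset N → ℝ := fun A => (∏ e ∈ A, y e) * ∏ e ∈ N₁ \ A, (1 - y e) with hw₁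
  set w₂ : Finset N → ℝ := fun B => (∏ e ∈ B, y e) * ∏ e ∈ N₂ \ B, (1 - y e) with hw₂
  have hw₁nn : ∀ A, 0 ≤ w₁ A := fun A =>
    mul_nonneg (Finset.prod_nonneg fun e _ => (hy e).1)
      (Finset.prod_nonneg fun e _ => by linarith [(hy e).2])
  have hw₂nn : ∀ B, 0 ≤ w₂ B := fun B =>
    mul_nonneg (Finset.prod_nonneg fun e _ => (hy e).1)
      (Finset.prod_nonneg fun e _ => by linarith [(hy e).2])
  -- rewrite the two restricted extensions
  have h1 : mlExt h (fun e => if e ∈ N₁ then y e else 0)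
      = ∑ A ∈ N₁.powerset, w₁ A * h A := by
    rw [mlExt_support h N₁ _ (fun e he => if_neg he)]
    refine Finset.sum_congr rfl fun A hA => ?_
    have hAs := Finset.mem_powerset.mp hA
    congr 1
    rw [hw₁]
    congr 1
    · exact Finset.prod_congr rfl fun e he => if_pos (hAs he)
    · exact Finset.prod_congr rfl fun e he => by
        rw [if_pos (Finset.mem_sdiff.mp he).1]
  have h2 : mlExt h (fun e => if e ∈ N₂ then y e else 0)
      = ∑ B ∈ N₂.powerset, w₂ B * h B := by
    rw [mlExt_support h N₂ _ (fun e he => if_neg he)]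
    refine Finset.sum_congr rfl fun B hB => ?_
    have hBs := Finset.mem_powerset.mp hB
    congr 1
    rw [hw₂]
    congr 1
    · exact Finset.prod_congr rfl fun e he => if_pos (hBs he)
    · exact Finset.prod_congr rfl fun e he => by
        rw [if_pos (Finset.mem_sdiff.mp he).1]
  -- total weight is one
  have hsum1 : ∑ A ∈ N₁.powerset, w₁ A = 1 := by
    have := Finset.prod_add (fun e => y e) (fun e => 1 - y e) N₁
    simp only [add_sub_cancel, Finset.prod_const_one] at this
    rw [← this]
  have hsum2 : ∑ B ∈ N₂.powerset, w₂ B = 1 := by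
    have := Finset.prod_add (fun e => y e) (fun e => 1 - y e) N₂
    simp only [add_sub_cancel, Finset.prod_const_one] at this
    rw [← this]
  -- decompose mlExt h y
  have hkey : mlExt h y = ∑ A ∈ N₁.powerset, ∑ B ∈ N₂.powerset,
      w₁ A * w₂ B * h (A ∪ B) := by
    unfold mlExt
    rw [← hcover, sum_powerset_disjUnion N₁ N₂ hdisj]
    refine Finset.sum_congr rfl fun A hA => Finset.sum_congr rfl fun B hB => ?_
    have hAs := Finset.mem_powerset.mp hA
    have hBs := Finset.mem_powerset.mp hB
    have hdAB : Disjoint A B := hdisj.mono hAs hBs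
    congr 1
    have e1 : ∏ e ∈ A ∪ B, y e = (∏ e ∈ A, y e) * ∏ e ∈ B, y e :=
      Finset.prod_union hdAB
    have hsplit : (N₁ ∪ N₂) \ (A ∪ B) = (N₁ \ A) ∪ (N₂ \ B) := by
      ext e
      simp only [Finset.mem_sdiff, Finset.mem_union]
      constructor
      · rintro ⟨h12, hAB⟩
        push_neg at hAB
        rcases h12 with h1 | h2
        · exact Or.inl ⟨h1, hAB.1⟩
        · exact Or.inr ⟨h2, hAB.2⟩
      · rintro (⟨h1, hA'⟩ | ⟨h2, hB'⟩)
        · refine ⟨Or.inl h1, ?_⟩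
          push_neg
          exact ⟨hA', fun hb => (Finset.disjoint_left.mp hdisj h1 (hBs hb))⟩
        · refine ⟨Or.inr h2, ?_⟩
          push_neg
          exact ⟨fun ha => (Finset.disjoint_left.mp hdisj (hAs ha) h2), hB'⟩
    have hd2 : Disjoint (N₁ \ A) (N₂ \ B) :=
      hdisj.mono (Finset.sdiff_subset) (Finset.sdiff_subset)
    have e2 : ∏ e ∈ (N₁ ∪ N₂) \ (A ∪ B), (1 - y e)
        = (∏ e ∈ N₁ \ A, (1 - y e)) * ∏ e ∈ N₂ \ B, (1 - y e) := by
      rw [hsplit, Finset.prod_union hd2]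
    rw [e1, e2, hw₁, hw₂]; ring
  -- main inequality
  have hle : mlExt h y ≤ ∑ A ∈ N₁.powerset, ∑ B ∈ N₂.powerset,
      w₁ A * w₂ B * (h A + h B) := by
    rw [hkey]
    refine Finset.sum_le_sum fun A hA => Finset.sum_le_sum fun B hB => ?_
    have : h (A ∪ B) ≤ h A + h B := by
      have := hsub A B
      have := hnonneg (A ∩ B)
      linarith
    exact mul_le_mul_of_nonneg_left this (mul_nonneg (hw₁nn A) (hw₂nn B))
  have heq : ∑ A ∈ N₁.powerset, ∑ B ∈ N₂.powerset, w₁ A * w₂ B * (h A + h B)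
      = mlExt h (fun e => if e ∈ N₁ then y e else 0) +
        mlExt h (fun e => if e ∈ N₂ then y e else 0) := by
    rw [h1, h2]
    have : ∀ A B, w₁ A * w₂ B * (h A + h B)
        = (w₁ A * h A) * w₂ B + w₁ A * (w₂ B * h B) := fun A B => by ring
    simp only [this, Finset.sum_add_distrib, ← Finset.sum_mul, ← Finset.mul_sum,
      hsum1, hsum2, mul_one, one_mul]
  linarith
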